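/- Fix κ² > 0. Let θ : ℝ → ℝ be C² with θ(t + 2π) = θ(t) − 2π for all t, solving θ''(t) = κ² sin θ(t) cos θ(t), and with θ'(t) ≠ 0 for all t. Then for every C¹ 2π-periodic ψ : ℝ → ℝ, setting φ := θ' ψ, one has ∫_{−π}^{π} ( |φ'(t)|² + κ² φ(t)² cos 2θ(t) ) dt = ∫_{−π}^{π} |θ'(t)|² |ψ'(t)|² dt ≥ 0. In particular, the second variation of the in-plane energy at such θ is nonnegative, so the degree-zero solutions are locally stable critical points. -/

import Mathlib

open Real Set MeasureTheory

theorem second_variation_degree_zero_nonneg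
    (κ : ℝ) (hκ : 0 < κ ^ 2)
    (θ : ℝ → ℝ) (hθ : ContDiff ℝ 2 θ)
    (hqp : ∀ t : ℝ, θ (t + 2 * π) = θ t - 2 * π)
    (hode : ∀ t : ℝ, deriv (deriv θ) t = κ ^ 2 * Real.sin (θ t) * Real.cos (θ t))
    (hne : ∀ t : ℝ, deriv θ t ≠ 0)
    (ψ : ℝ → ℝ) (hψ : ContDiff ℝ 1 ψ)
    (hψper : ∀ t : ℝ, ψ (t + 2 * π) = ψ t) :
    (∫ t in (-π)..π,
        ((deriv (fun s => deriv θ s * ψ s) t) ^ 2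
          + κ ^ 2 * (deriv θ t * ψ t) ^ 2 * Real.cos (2 * θ t)))
      = (∫ t in (-π)..π, (deriv θ t) ^ 2 * (deriv ψ t) ^ 2) ∧
    0 ≤ ∫ t in (-π)..π,
        ((deriv (fun s => deriv θ s * ψ s) t) ^ 2
          + κ ^ 2 * (deriv θ t * ψ t) ^ 2 * Real.cos (2 * θ t)) := by
  have hθD : Differentiable ℝ θ := hθ.differentiable (by norm_num)
  have hθC : Continuous θ := hθD.continuous
  set u : ℝ → ℝ := deriv θ with hu_def
  have hu : ContDiff ℝ 1 u := by
    have h : ContDiff ℝ (1 + 1 : ℕ) θ := by exact_mod_cast hθ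
    exact (contDiff_succ_iff_deriv.mp h).2.2
  have huD : Differentiable ℝ u := hu.differentiable one_ne_zero
  have huC : Continuous u := huD.continuous
  have hψD : Differentiable ℝ ψ := hψ.differentiable one_ne_zero
  have hψC : Continuous ψ := hψD.continuous
  have hψ'C : Continuous (deriv ψ) := (contDiff_one_iff_deriv.mp hψ).2
  set g : ℝ → ℝ := fun t => κ ^ 2 * Real.sin (θ t) * Real.cos (θ t) with hg_def
  have hgC : Continuous g := ((continuous_const.mul (Real.continuous_sin.comp hθC)).mul (Real.continuous_cos.comp hθC))
  have hgu : ∀ t, deriv u t = g t := hode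
  -- derivative of g
  have hgd : ∀ t, HasDerivAt g (κ ^ 2 * Real.cos (2 * θ t) * u t) t := by
    intro t
    have ht : HasDerivAt θ (u t) t := (hθD t).hasDerivAt
    have hs : HasDerivAt (fun s => Real.sin (θ s)) (Real.cos (θ t) * u t) t :=
      (Real.hasDerivAt_sin (θ t)).comp t ht
    have hc : HasDerivAt (fun s => Real.cos (θ s)) (-Real.sin (θ t) * u t) t :=
      (Real.hasDerivAt_cos (θ t)).comp t ht
    have h : HasDerivAt g _ t := (hs.const_mul (κ ^ 2)).fun_mul hc
    convert h using 1
    rw [Real.cos_two_mul]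
    linear_combination (κ ^ 2 * u t) * Real.sin_sq_add_cos_sq (θ t)
  -- derivative of φ = uψ
  have hE : ∀ t, deriv (fun s => u s * ψ s) t = g t * ψ t + u t * deriv ψ t := by
    intro t
    rw [((huD t).hasDerivAt.fun_mul (hψD t).hasDerivAt).deriv, hgu t]
  set D : ℝ → ℝ := fun t =>
      (g t * ψ t + u t * deriv ψ t) ^ 2
        + κ ^ 2 * (u t * ψ t) ^ 2 * Real.cos (2 * θ t)
        - u t ^ 2 * (deriv ψ t) ^ 2 with hD_def
  have hDC : Continuous D := by
    apply Continuous.sub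
    · apply Continuous.add
      · exact ((hgC.mul hψC).add (huC.mul hψ'C)).pow 2
      · exact (continuous_const.mul ((huC.mul hψC).pow 2)).mul
          (Real.continuous_cos.comp (continuous_const.mul hθC))
    · exact (huC.pow 2).mul (hψ'C.pow 2)
  set F : ℝ → ℝ := fun t => u t * g t * ψ t ^ 2 with hF_def
  have hFd : ∀ t, HasDerivAt F (D t) t := by
    intro t
    have h1 : HasDerivAt u (g t) t := by rw [← hgu t]; exact (huD t).hasDerivAt
    have h3 : HasDerivAt (fun s => ψ s ^ 2) (2 * ψ t * deriv ψ t) t := by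
      simpa using (hψD t).hasDerivAt.fun_pow 2
    have h : HasDerivAt F _ t := ((h1.fun_mul (hgd t)).fun_mul h3)
    convert h using 1
    simp only [hD_def, hg_def]
    ring
  -- rewrite the integrand
  have hEq : ∀ t,
      (deriv (fun s => u s * ψ s) t) ^ 2
        + κ ^ 2 * (u t * ψ t) ^ 2 * Real.cos (2 * θ t)
      = D t + u t ^ 2 * (deriv ψ t) ^ 2 := by
    intro t
    rw [hE t]
    simp only [hD_def]
    ring
  -- periodicity
  have huper : ∀ t, u (t + 2 * π) = u t := by
    intro t
    have h1 : deriv (fun s => θ (s + 2 * π)) t = u (t + 2 * π) :=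
      deriv_comp_add_const θ (2 * π) t
    have h2 : (fun s => θ (s + 2 * π)) = fun s => θ s - 2 * π := funext hqp
    rw [h2, deriv_sub_const] at h1
    exact h1.symm
  have hgper : ∀ t, g (t + 2 * π) = g t := by
    intro t
    simp only [hg_def, hqp t, Real.sin_sub_two_pi, Real.cos_sub_two_pi]
  have hFper : F π = F (-π) := by
    have h1 : F (-π + 2 * π) = F (-π) := by
      simp only [hF_def]
      rw [huper, hgper, hψper]
    have h2 : (-π) + 2 * π = π := by ring
    rw [h2] at h1
    exact h1
  -- integral of D
  have hDint : (∫ t in (-π)..π, D t) = F π - F (-π) :=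
    intervalIntegral.integral_eq_sub_of_hasDerivAt (fun t _ => hFd t)
      (hDC.intervalIntegrable _ _)
  have hDzero : (∫ t in (-π)..π, D t) = 0 := by rw [hDint, hFper]; ring
  have hqC : Continuous (fun t => u t ^ 2 * (deriv ψ t) ^ 2) :=
    (huC.pow 2).mul (hψ'C.pow 2)
  have hmain : (∫ t in (-π)..π,
      ((deriv (fun s => u s * ψ s) t) ^ 2
        + κ ^ 2 * (u t * ψ t) ^ 2 * Real.cos (2 * θ t)))
      = ∫ t in (-π)..π, u t ^ 2 * (deriv ψ t) ^ 2 := by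
    rw [intervalIntegral.integral_congr (g := fun t => D t + u t ^ 2 * (deriv ψ t) ^ 2)
      (fun t _ => hEq t)]
    rw [intervalIntegral.integral_add (hDC.intervalIntegrable _ _)
      (hqC.intervalIntegrable _ _), hDzero, zero_add]
  refine ⟨hmain, ?_⟩
  rw [hmain]
  apply intervalIntegral.integral_nonneg (by linarith [Real.pi_pos])
  intro t _
  positivity
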